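/- arXiv:1402.1108 — 2 statements merged into one kernel-verified Lean document; each statement's English description precedes it below -/
import Mathlib

section
/- (Holomorphic extension and vanishing of the 1-jet differential at a transversal point at infinity; local version of Theorem 7.1.) Let d ≥ 4 be an integer and let R and R₂ be polynomials in two complex variables satisfying R₂(x, y) = y^d · R(x/y, 1/y) for all (x, y) ∈ ℂ² with y ≠ 0. Let f : 𝔻 → ℂ², ζ ↦ (x₂(ζ), y₂(ζ)), be a holomorphic map with R₂(x₂(ζ), y₂(ζ)) = 0 for all ζ ∈ 𝔻, and let ζ₀ ∈ 𝔻 satisfy y₂(ζ₀) = 0 and (∂R₂/∂x)(x₂(ζ₀), 0) ≠ 0. Then the function g(ζ) := − y₂'(ζ) · y₂(ζ)^{d−3} / (∂R₂/∂x)(x₂(ζ), y₂(ζ)) is holomorphic on a neighborhood of ζ₀, satisfies g(ζ₀) = 0, and for every ζ near ζ₀ with y₂(ζ) ≠ 0 it coincides with the 1-jet differential y₀'(ζ) / (∂R/∂x)(x₀(ζ), y₀(ζ)), where x₀ = x₂/y₂ and y₀ = 1/y₂. -/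
open MvPolynomial

private lemma eval_fst_hasDerivAt (Q : MvPolynomial (Fin 2) ℂ) (y x : ℂ) :
    HasDerivAt (fun t : ℂ => eval ![t, y] Q) (eval ![x, y] (pderiv (0 : Fin 2) Q)) x := by
  induction Q using MvPolynomial.induction_on with
  | C a => simpa using hasDerivAt_const x a
  | add p q hp hq => simpa [map_add] using hp.fun_add hq
  | mul_X p i hp =>
    fin_cases i
    · have h := hp.fun_mul (hasDerivAt_id x)
      have hfun : (fun t : ℂ => eval ![t, y] (p * X 0)) = fun t => eval ![t, y] p * t := by
        funext t; simp
      show HasDerivAt (fun t : ℂ => eval ![t, y] (p * X 0))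
        (eval ![x, y] (pderiv (0 : Fin 2) (p * X 0))) x
      rw [hfun]
      refine h.congr_deriv ?_
      simp [pderiv_mul, pderiv_X_self]
      ring
    · have h := hp.mul_const y
      have hfun : (fun t : ℂ => eval ![t, y] (p * X 1)) = fun t => eval ![t, y] p * y := by
        funext t; simp
      show HasDerivAt (fun t : ℂ => eval ![t, y] (p * X 1))
        (eval ![x, y] (pderiv (0 : Fin 2) (p * X 1))) x
      rw [hfun]
      refine h.congr_deriv ?_
      simp [pderiv_mul, pderiv_X, mul_comm]

private lemma eval_comp_dwa (Q : MvPolynomial (Fin 2) ℂ) {u v : ℂ → ℂ} {s : Set ℂ} {ζ : ℂ}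
    (hu : DifferentiableWithinAt ℂ u s ζ) (hv : DifferentiableWithinAt ℂ v s ζ) :
    DifferentiableWithinAt ℂ (fun ζ => eval ![u ζ, v ζ] Q) s ζ := by
  induction Q using MvPolynomial.induction_on with
  | C a => simpa using differentiableWithinAt_const a
  | add p q hp hq => simpa [map_add] using hp.fun_add hq
  | mul_X p i hp =>
    fin_cases i
    · simpa [map_mul] using hp.fun_mul hu
    · simpa [map_mul] using hp.fun_mul hv

private lemma pderiv_rel (d : ℕ) (hd : 1 ≤ d) (R R₂ : MvPolynomial (Fin 2) ℂ)
    (hrel : ∀ x y : ℂ, y ≠ 0 →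
      MvPolynomial.eval ![x, y] R₂ = y ^ d * MvPolynomial.eval ![x / y, 1 / y] R)
    (x y : ℂ) (hy : y ≠ 0) :
    eval ![x, y] (pderiv (0 : Fin 2) R₂)
      = y ^ (d - 1) * eval ![x / y, 1 / y] (pderiv (0 : Fin 2) R) := by
  have h1 : HasDerivAt (fun t : ℂ => eval ![t, y] R₂)
      (eval ![x, y] (pderiv (0 : Fin 2) R₂)) x := eval_fst_hasDerivAt R₂ y x
  have h2 : HasDerivAt (fun t : ℂ => y ^ d * eval ![t / y, 1 / y] R)
      (y ^ d * (eval ![x / y, 1 / y] (pderiv (0 : Fin 2) R) * (1 / y))) x := by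
    have hcomp := (eval_fst_hasDerivAt R (1 / y) (x / y)).comp x
      ((hasDerivAt_id x).div_const y)
    simpa using hcomp.const_mul (y ^ d)
  have heq : (fun t : ℂ => eval ![t, y] R₂)
      = fun t : ℂ => y ^ d * eval ![t / y, 1 / y] R := by funext t; exact hrel t y hy
  have := h1.unique (heq ▸ h2)
  rw [this]
  have : y ^ d = y ^ (d - 1) * y := by
    rw [← pow_succ]; congr 1; omega
  rw [this]; field_simp

/-- holomorphic extension and vanishing of the 1-jet differential at a
transversal point at infinity (local version of Théorème 7.1). With
`R₂(x, y) = y^d·R(x/y, 1/y)` for `y ≠ 0`, `d ≥ 4`, a holomorphic disc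
`ζ ↦ (x₂ ζ, y₂ ζ)` lying in `{R₂ = 0}`, and `ζ₀` with `y₂ ζ₀ = 0` and
`(∂R₂/∂x)(x₂ ζ₀, 0) ≠ 0`, the function
`g(ζ) = − y₂'(ζ)·y₂(ζ)^{d−3} / (∂R₂/∂x)(x₂ ζ, y₂ ζ)` is holomorphic on a neighborhood of
`ζ₀`, vanishes at `ζ₀`, and coincides with `y₀'/(∂R/∂x)(x₀, y₀)` (where `x₀ = x₂/y₂`,
`y₀ = 1/y₂`) at the nearby points where `y₂ ≠ 0`. -/
theorem one_jet_differential_extends_and_vanishes_at_infinity (d : ℕ) (hd : 4 ≤ d)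
    (R R₂ : MvPolynomial (Fin 2) ℂ)
    (hrel : ∀ x y : ℂ, y ≠ 0 →
      MvPolynomial.eval ![x, y] R₂ = y ^ d * MvPolynomial.eval ![x / y, 1 / y] R)
    (x₂ y₂ : ℂ → ℂ)
    (hx : DifferentiableOn ℂ x₂ (Metric.ball (0 : ℂ) 1))
    (hy : DifferentiableOn ℂ y₂ (Metric.ball (0 : ℂ) 1))
    (hcurve : ∀ ζ ∈ Metric.ball (0 : ℂ) 1, MvPolynomial.eval ![x₂ ζ, y₂ ζ] R₂ = 0)
    (ζ₀ : ℂ) (hζ₀ : ζ₀ ∈ Metric.ball (0 : ℂ) 1) (hy0 : y₂ ζ₀ = 0)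
    (hR2x : MvPolynomial.eval ![x₂ ζ₀, 0] (MvPolynomial.pderiv (0 : Fin 2) R₂) ≠ 0) :
    ∃ V : Set ℂ, IsOpen V ∧ ζ₀ ∈ V ∧ V ⊆ Metric.ball (0 : ℂ) 1 ∧
      DifferentiableOn ℂ
        (fun ζ => - (deriv y₂ ζ * (y₂ ζ) ^ (d - 3) /
          MvPolynomial.eval ![x₂ ζ, y₂ ζ] (MvPolynomial.pderiv (0 : Fin 2) R₂))) V ∧
      - (deriv y₂ ζ₀ * (y₂ ζ₀) ^ (d - 3) /
          MvPolynomial.eval ![x₂ ζ₀, y₂ ζ₀] (MvPolynomial.pderiv (0 : Fin 2) R₂)) = 0 ∧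
      ∀ ζ ∈ V, y₂ ζ ≠ 0 →
        - (deriv y₂ ζ * (y₂ ζ) ^ (d - 3) /
            MvPolynomial.eval ![x₂ ζ, y₂ ζ] (MvPolynomial.pderiv (0 : Fin 2) R₂)) =
          deriv (fun w => 1 / y₂ w) ζ /
            MvPolynomial.eval ![x₂ ζ / y₂ ζ, 1 / y₂ ζ]
              (MvPolynomial.pderiv (0 : Fin 2) R) := by
  classical
  set D : ℂ → ℂ := fun ζ => eval ![x₂ ζ, y₂ ζ] (pderiv (0 : Fin 2) R₂) with hD
  have hDcont : ContinuousOn D (Metric.ball (0 : ℂ) 1) := by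
    apply DifferentiableOn.continuousOn (𝕜 := ℂ)
    intro ζ hζ
    exact eval_comp_dwa _ (hx ζ hζ) (hy ζ hζ)
  set V : Set ℂ := Metric.ball (0 : ℂ) 1 ∩ D ⁻¹' {0}ᶜ with hV
  have hVopen : IsOpen V :=
    hDcont.isOpen_inter_preimage Metric.isOpen_ball (isOpen_compl_singleton)
  have hζ₀V : ζ₀ ∈ V := by
    refine ⟨hζ₀, ?_⟩
    simp only [Set.mem_preimage, Set.mem_compl_iff, Set.mem_singleton_iff, hD, hy0]
    exact hR2x
  have hVsub : V ⊆ Metric.ball (0 : ℂ) 1 := Set.inter_subset_left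
  have hDne : ∀ ζ ∈ V, D ζ ≠ 0 := fun ζ hζ => hζ.2
  have hy' : DifferentiableOn ℂ (deriv y₂) (Metric.ball (0 : ℂ) 1) :=
    ((hy.analyticOnNhd Metric.isOpen_ball).deriv).differentiableOn
  refine ⟨V, hVopen, hζ₀V, hVsub, ?_, ?_, ?_⟩
  · intro ζ hζ
    have h1 : DifferentiableWithinAt ℂ
        (fun ζ => deriv y₂ ζ * (y₂ ζ) ^ (d - 3)) V ζ :=
      ((hy' ζ (hVsub hζ)).mono hVsub).mul (((hy ζ (hVsub hζ)).mono hVsub).pow _)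
    have h2 : DifferentiableWithinAt ℂ D V ζ :=
      eval_comp_dwa _ ((hx ζ (hVsub hζ)).mono hVsub) ((hy ζ (hVsub hζ)).mono hVsub)
    exact ((h1.div h2 (hDne ζ hζ)).neg)
  · rw [hy0, zero_pow (by omega : d - 3 ≠ 0)]
    simp
  · intro ζ hζ hyζ
    have hyd : DifferentiableAt ℂ y₂ ζ :=
      (hy ζ (hVsub hζ)).differentiableAt (Metric.isOpen_ball.mem_nhds (hVsub hζ))
    have hinv : HasDerivAt (fun w => 1 / y₂ w) (-(deriv y₂ ζ) / (y₂ ζ) ^ 2) ζ := by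
      have h := hyd.hasDerivAt.fun_inv hyζ
      simpa [one_div] using h
    rw [hinv.deriv]
    have hkey := pderiv_rel d (by omega) R R₂ hrel (x₂ ζ) (y₂ ζ) hyζ
    have hBne : eval ![x₂ ζ / y₂ ζ, 1 / y₂ ζ] (pderiv (0 : Fin 2) R) ≠ 0 := by
      intro h0
      apply hDne ζ hζ
      simp only [hD, hkey, h0, mul_zero]
    have hyne : (y₂ ζ) ^ (d - 1) ≠ 0 := pow_ne_zero _ hyζ
    rw [hkey]
    have hpow : (y₂ ζ) ^ (d - 3) * (y₂ ζ) ^ 2 = (y₂ ζ) ^ (d - 1) := by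
      rw [← pow_add]; congr 1; omega
    field_simp
    rw [← hpow]; ring
end

section
/- (Asymptotics of a weighted partition sum.) Fix an integer κ ≥ 1 and let H_κ = 1 + 1/2 + ⋯ + 1/κ denote the κ-th harmonic number. For each positive integer m define S(m) = Σ (m₁ + m₂ + ⋯ + m_κ), the sum being over all tuples (m₁, …, m_κ) ∈ ℕ^κ satisfying m₁ + 2m₂ + ⋯ + κ·m_κ = m. Then there exists a constant C > 0 such that for all integers m ≥ 1, | S(m) − H_κ · m^κ / (κ! · κ!) | ≤ C · m^{κ−1}. -/
open Finset

noncomputable section WPS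

def wpsSols (κ n : ℕ) : Finset (Fin κ → ℕ) :=
  (Fintype.piFinset fun _ : Fin κ => Finset.range (n + 1)).filter
    (fun t => ∑ i : Fin κ, ((i : ℕ) + 1) * t i = n)

lemma wps_mem_sols {κ n : ℕ} {t : Fin κ → ℕ} :
    t ∈ wpsSols κ n ↔ ∑ i : Fin κ, ((i : ℕ) + 1) * t i = n := by
  constructor
  · intro h; exact (Finset.mem_filter.1 h).2
  · intro h
    refine Finset.mem_filter.2 ⟨Fintype.mem_piFinset.2 fun i => ?_, h⟩
    rw [Finset.mem_range, Nat.lt_succ_iff]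
    calc t i ≤ ((i : ℕ) + 1) * t i := Nat.le_mul_of_pos_left _ (Nat.succ_pos _)
    _ ≤ ∑ i : Fin κ, ((i : ℕ) + 1) * t i :=
        Finset.single_le_sum (f := fun i : Fin κ => ((i:ℕ)+1) * t i) (fun i _ => Nat.zero_le _) (Finset.mem_univ i)
    _ = n := h

def wpsP (κ n : ℕ) : ℕ := (wpsSols κ n).card

def wpsS (κ n : ℕ) : ℕ := ∑ t ∈ wpsSols κ n, ∑ i : Fin κ, t i

lemma wps_split (κ : ℕ) (t : Fin (κ+1) → ℕ) :
    ∑ i : Fin (κ+1), ((i : ℕ) + 1) * t i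
      = (∑ i : Fin κ, ((i : ℕ) + 1) * (Fin.init t) i) + (κ+1) * t (Fin.last κ) := by
  rw [Fin.sum_univ_castSucc]
  simp [Fin.init, Fin.val_last]

lemma wps_sum_succ (κ n : ℕ) (w : (Fin (κ+1) → ℕ) → ℕ) :
    ∑ t ∈ wpsSols (κ+1) n, w t
      = ∑ k ∈ Finset.range (n/(κ+1) + 1),
          ∑ s ∈ wpsSols κ (n - (κ+1)*k), w (Fin.snoc s k) := by
  rw [Finset.sum_sigma']
  refine Finset.sum_bij' (i := fun t _ => (⟨t (Fin.last κ), Fin.init t⟩ : Σ _ : ℕ, (Fin κ → ℕ)))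
    (j := fun q _ => Fin.snoc q.2 q.1) ?_ ?_ ?_ ?_ ?_
  · intro t ht
    have h := wps_mem_sols.1 ht
    rw [wps_split] at h
    have hle : (κ+1) * t (Fin.last κ) ≤ n := by omega
    refine Finset.mem_sigma.2 ⟨?_, ?_⟩
    · rw [Finset.mem_range, Nat.lt_succ_iff]
      exact Nat.le_div_iff_mul_le (Nat.succ_pos κ) |>.2 (by linarith [hle])
    · exact wps_mem_sols.2 (Nat.eq_sub_of_add_eq h)
  · intro q hq
    have hq' := Finset.mem_sigma.1 hq
    have hk : (κ+1) * q.1 ≤ n := by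
      have h1 := Finset.mem_range.1 hq'.1
      have h2 := (Nat.le_div_iff_mul_le (Nat.succ_pos κ)).1 (Nat.lt_succ_iff.1 h1)
      linarith
    have hs := wps_mem_sols.1 hq'.2
    refine wps_mem_sols.2 ?_
    rw [wps_split]
    simp only [Fin.init_snoc, Fin.snoc_last]
    rw [hs, Nat.sub_add_cancel hk]
  · intro t ht; exact Fin.snoc_init_self t
  · intro q hq; simp
  · intro t ht; simp [Fin.snoc_init_self]

lemma wpsP_succ (κ n : ℕ) :
    wpsP (κ+1) n = ∑ k ∈ Finset.range (n/(κ+1) + 1), wpsP κ (n - (κ+1)*k) := by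
  have h := wps_sum_succ κ n (fun _ => 1)
  simp only [wpsP, Finset.card_eq_sum_ones]
  exact h

lemma wpsS_succ (κ n : ℕ) :
    wpsS (κ+1) n = ∑ k ∈ Finset.range (n/(κ+1) + 1),
      (wpsS κ (n - (κ+1)*k) + k * wpsP κ (n - (κ+1)*k)) := by
  have := wps_sum_succ κ n (fun t => ∑ i : Fin (κ+1), t i)
  rw [wpsS, this]
  refine Finset.sum_congr rfl fun k _ => ?_
  have hsnoc : ∀ s : Fin κ → ℕ, ∑ i : Fin (κ+1), (Fin.snoc s k : Fin (κ+1) → ℕ) i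
      = (∑ i : Fin κ, s i) + k := by
    intro s
    rw [Fin.sum_univ_castSucc]
    simp
  rw [Finset.sum_congr rfl fun s _ => hsnoc s, Finset.sum_add_distrib]
  simp [wpsS, wpsP, mul_comm]

lemma wpsP_one (n : ℕ) : wpsP 1 n = 1 := by
  have : wpsSols 1 n = {fun _ => n} := by
    ext t
    rw [wps_mem_sols, Finset.mem_singleton]
    constructor
    · intro h
      funext i
      have hi : i = 0 := Subsingleton.elim _ _
      subst hi
      simpa using h
    · intro h; subst h; simp
  simp [wpsP, this]

lemma wpsS_one (n : ℕ) : wpsS 1 n = n := by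
  have : wpsSols 1 n = {fun _ => n} := by
    ext t
    rw [wps_mem_sols, Finset.mem_singleton]
    constructor
    · intro h
      funext i
      have hi : i = 0 := Subsingleton.elim _ _
      subst hi
      simpa using h
    · intro h; subst h; simp
  simp [wpsS, this]

lemma wps_pow_sub_pow_le {x y : ℝ} (hy : 0 ≤ y) (hxy : y ≤ x) (a : ℕ) :
    x ^ (a+1) - y ^ (a+1) ≤ (a+1) * x ^ a * (x - y) := by
  have hx : 0 ≤ x := le_trans hy hxy
  rw [← geom_sum₂_mul x y (a+1)]
  have hb : ∑ i ∈ Finset.range (a+1), x ^ i * y ^ (a + 1 - 1 - i) ≤ (a+1) * x ^ a := by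
    calc ∑ i ∈ Finset.range (a+1), x ^ i * y ^ (a + 1 - 1 - i)
        ≤ ∑ _i ∈ Finset.range (a+1), x ^ a := by
          refine Finset.sum_le_sum fun i hi => ?_
          have hia : i ≤ a := Nat.lt_succ_iff.1 (Finset.mem_range.1 hi)
          calc x ^ i * y ^ (a + 1 - 1 - i) ≤ x ^ i * x ^ (a + 1 - 1 - i) := by
                refine mul_le_mul_of_nonneg_left (pow_le_pow_left₀ hy hxy _) (pow_nonneg hx _)
          _ = x ^ a := by rw [← pow_add]; congr 1; omega
    _ = (a+1) * x ^ a := by rw [Finset.sum_const, Finset.card_range]; push_cast; ring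
  exact mul_le_mul_of_nonneg_right hb (by linarith) |>.trans_eq rfl

lemma wps_le_pow_sub_pow {x y : ℝ} (hy : 0 ≤ y) (hxy : y ≤ x) (a : ℕ) :
    (a+1) * y ^ a * (x - y) ≤ x ^ (a+1) - y ^ (a+1) := by
  rw [← geom_sum₂_mul x y (a+1)]
  have hb : (a+1) * y ^ a ≤ ∑ i ∈ Finset.range (a+1), x ^ i * y ^ (a + 1 - 1 - i) := by
    calc ((a:ℝ)+1) * y ^ a = ∑ _i ∈ Finset.range (a+1), y ^ a := by
          rw [Finset.sum_const, Finset.card_range]; push_cast; ring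
    _ ≤ ∑ i ∈ Finset.range (a+1), x ^ i * y ^ (a + 1 - 1 - i) := by
          refine Finset.sum_le_sum fun i hi => ?_
          have hia : i ≤ a := Nat.lt_succ_iff.1 (Finset.mem_range.1 hi)
          calc y ^ a = y ^ i * y ^ (a + 1 - 1 - i) := by rw [← pow_add]; congr 1; omega
          _ ≤ x ^ i * y ^ (a + 1 - 1 - i) := by
              refine mul_le_mul_of_nonneg_right (pow_le_pow_left₀ hy hxy _) (pow_nonneg hy _)
  exact mul_le_mul_of_nonneg_right hb (by linarith)

/-- The key Riemann-sum estimate: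
`n^(a+1)/(j(a+1)) ≤ ∑_{k=0}^{⌊n/j⌋} (n-jk)^a ≤ n^(a+1)/(j(a+1)) + n^a`. -/
lemma wps_sum_pow_bounds (j a n : ℕ) (hj : 1 ≤ j) :
    (n:ℝ)^(a+1) / (j*(a+1)) ≤ (∑ k ∈ Finset.range (n/j + 1), ((n - j*k : ℕ):ℝ)^a) ∧
    (∑ k ∈ Finset.range (n/j + 1), ((n - j*k : ℕ):ℝ)^a) ≤ (n:ℝ)^(a+1)/(j*(a+1)) + (n:ℝ)^a := by
  set K := n / j with hK
  set f : ℕ → ℝ := fun k => ((n - j*k : ℕ):ℝ) with hf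
  have hjpos : 0 < j := hj
  have hfK1 : f (K+1) = 0 := by
    have : n < j * (K+1) := by
      have h1 : j * K + n % j = n := Nat.div_add_mod n j
      have h2 := Nat.mod_lt n hjpos
      have h3 : j * (K+1) = j*K + j := by ring
      omega
    simp [hf, Nat.sub_eq_zero_of_le (le_of_lt this)]
  have hfnonneg : ∀ k, 0 ≤ f k := fun k => Nat.cast_nonneg _
  have hval : ∀ k ≤ K, f k = (n:ℝ) - j*k := by
    intro k hk
    have hjK : j * K ≤ n := by rw [mul_comm]; exact Nat.div_mul_le_self n j
    have : j * k ≤ n := le_trans (Nat.mul_le_mul_left j hk) hjK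
    simp only [hf]
    push_cast [this]
    ring
  have hmono : ∀ k ≤ K, f (k+1) ≤ f k := by
    intro k hk
    simp only [hf]
    have hexp : j*(k+1) = j*k + j := by ring
    have : n - j*(k+1) ≤ n - j*k := by omega
    exact_mod_cast Nat.cast_le.2 this
  have hdiff_le : ∀ k ≤ K, f k - f (k+1) ≤ j := by
    intro k hk
    simp only [hf]
    have hexp : j*(k+1) = j*k + j := by ring
    have h1 : (n - j*(k+1) : ℕ) + j ≥ (n - j*k : ℕ) := by omega
    have := (Nat.cast_le (α := ℝ)).2 h1
    push_cast at this
    linarith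
  have hdiff_eq : ∀ k < K, f k - f (k+1) = j := by
    intro k hk
    rw [hval k (le_of_lt hk), hval (k+1) hk]
    push_cast
    ring
  have htel : ∑ k ∈ Finset.range (K+1), (f k ^ (a+1) - f (k+1) ^ (a+1))
      = (n:ℝ)^(a+1) := by
    rw [Finset.sum_range_sub' (fun k => f k ^ (a+1))]
    rw [hfK1]
    simp [hf]
  have hja : (0:ℝ) < (j:ℝ) * ((a:ℝ)+1) := by positivity
  constructor
  · -- lower bound
    have hupper : (n:ℝ)^(a+1) ≤ ((a:ℝ)+1) * (j:ℝ) * ∑ k ∈ Finset.range (K+1), f k ^ a := by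
      rw [← htel, Finset.mul_sum]
      refine Finset.sum_le_sum fun k hk => ?_
      have hkK : k ≤ K := Nat.lt_succ_iff.1 (Finset.mem_range.1 hk)
      calc f k ^ (a+1) - f (k+1) ^ (a+1)
          ≤ ((a:ℝ)+1) * f k ^ a * (f k - f (k+1)) :=
            wps_pow_sub_pow_le (hfnonneg _) (hmono k hkK) a
      _ ≤ ((a:ℝ)+1) * f k ^ a * j := by
            refine mul_le_mul_of_nonneg_left (hdiff_le k hkK) (by positivity)
      _ = ((a:ℝ)+1) * (j:ℝ) * f k ^ a := by ring
    rw [div_le_iff₀ hja]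
    calc (n:ℝ)^(a+1) ≤ ((a:ℝ)+1) * (j:ℝ) * ∑ k ∈ Finset.range (K+1), f k ^ a := hupper
    _ = (∑ k ∈ Finset.range (K+1), f k ^ a) * ((j:ℝ) * ((a:ℝ)+1)) := by ring
  · -- upper bound
    have hlower : ((a:ℝ)+1) * (j:ℝ) * ((∑ k ∈ Finset.range (K+1), f k ^ a) - (n:ℝ)^a)
        ≤ (n:ℝ)^(a+1) := by
      have hshift : ∑ k ∈ Finset.range (K+1), f k ^ a
          = (∑ k ∈ Finset.range K, f (k+1) ^ a) + f 0 ^ a :=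
        Finset.sum_range_succ' (fun k => f k ^ a) K
      have hf0 : f 0 = (n:ℝ) := by simp [hf]
      have step : ((a:ℝ)+1) * (j:ℝ) * (∑ k ∈ Finset.range K, f (k+1) ^ a)
          ≤ ∑ k ∈ Finset.range K, (f k ^ (a+1) - f (k+1) ^ (a+1)) := by
        rw [Finset.mul_sum]
        refine Finset.sum_le_sum fun k hk => ?_
        have hkK : k < K := Finset.mem_range.1 hk
        calc ((a:ℝ)+1) * (j:ℝ) * f (k+1) ^ a
            = ((a:ℝ)+1) * f (k+1) ^ a * (f k - f (k+1)) := by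
              rw [hdiff_eq k hkK]; ring
        _ ≤ f k ^ (a+1) - f (k+1) ^ (a+1) :=
              wps_le_pow_sub_pow (hfnonneg _) (hmono k (le_of_lt hkK)) a
      have htelK : ∑ k ∈ Finset.range K, (f k ^ (a+1) - f (k+1) ^ (a+1))
          = f 0 ^ (a+1) - f K ^ (a+1) := Finset.sum_range_sub' (fun k => f k ^ (a+1)) K
      have hfKpow : (0:ℝ) ≤ f K ^ (a+1) := by positivity
      rw [hshift, hf0]
      have := step.trans_eq htelK
      rw [hf0] at this
      nlinarith [this]
    have h2 : (∑ k ∈ Finset.range (K+1), f k ^ a) - (n:ℝ)^a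
        ≤ (n:ℝ)^(a+1)/((j:ℝ)*((a:ℝ)+1)) := by
      rw [le_div_iff₀ hja]
      nlinarith [hlower]
    linarith

def wpsH (κ : ℕ) : ℝ := ∑ j ∈ Finset.Icc 1 κ, (1:ℝ)/j

lemma wpsH_nonneg (κ : ℕ) : 0 ≤ wpsH κ :=
  Finset.sum_nonneg fun j _ => by positivity

lemma wpsH_succ (κ : ℕ) : wpsH (κ+1) = wpsH κ + 1/((κ:ℝ)+1) := by
  rw [wpsH, wpsH, Finset.sum_Icc_succ_top (Nat.one_le_iff_ne_zero.2 (Nat.succ_ne_zero κ))]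
  push_cast
  ring

lemma wpsH_one : wpsH 1 = 1 := by simp [wpsH]

lemma wps_abs_sum_sub_le {s : Finset ℕ} (f g : ℕ → ℝ) {B : ℝ}
    (h : ∀ i ∈ s, |f i - g i| ≤ B) :
    |∑ i ∈ s, f i - ∑ i ∈ s, g i| ≤ s.card * B := by
  rw [← Finset.sum_sub_distrib]
  refine (Finset.abs_sum_le_sum_abs _ _).trans ?_
  calc ∑ i ∈ s, |f i - g i| ≤ s.card • B := Finset.sum_le_card_nsmul s _ B h
  _ = s.card * B := nsmul_eq_mul _ _

set_option maxHeartbeats 2000000 in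
lemma wps_key (k : ℕ) : ∃ C : ℝ, 0 < C ∧ ∀ n : ℕ,
    |(wpsP (k+1) n : ℝ) - (n:ℝ)^k / ((k.factorial : ℝ) * ((k+1).factorial : ℝ))|
      ≤ C * ((n:ℝ)+1)^k / ((n:ℝ)+1) ∧
    |(wpsS (k+1) n : ℝ) - wpsH (k+1) * (n:ℝ)^(k+1)
        / (((k+1).factorial : ℝ) * ((k+1).factorial : ℝ))|
      ≤ C * ((n:ℝ)+1)^k := by
  induction k with
  | zero =>
    refine ⟨1, one_pos, fun n => ⟨?_, ?_⟩⟩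
    · rw [wpsP_one]
      norm_num [Nat.factorial]
      positivity
    · rw [wpsS_one, wpsH_one]
      norm_num [Nat.factorial]
  | succ k ih =>
    obtain ⟨C, hC, hIH⟩ := ih
    refine ⟨wpsH (k+1) + 3*C + 3, by have := wpsH_nonneg (k+1); linarith, fun n => ?_⟩
    set K := n / (k+2) with hKdef
    set cP : ℝ := (k.factorial : ℝ) * ((k+1).factorial : ℝ) with hcP
    set cS : ℝ := ((k+1).factorial : ℝ) * ((k+1).factorial : ℝ) with hcS
    have hcP1 : (1:ℝ) ≤ cP := by
      rw [hcP]
      have h1 : (1:ℝ) ≤ (k.factorial : ℝ) := by exact_mod_cast Nat.one_le_iff_ne_zero.2 k.factorial_ne_zero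
      have h2 : (1:ℝ) ≤ ((k+1).factorial : ℝ) := by exact_mod_cast Nat.one_le_iff_ne_zero.2 (k+1).factorial_ne_zero
      nlinarith
    have hcS1 : (1:ℝ) ≤ cS := by
      rw [hcS]
      have h2 : (1:ℝ) ≤ ((k+1).factorial : ℝ) := by exact_mod_cast Nat.one_le_iff_ne_zero.2 (k+1).factorial_ne_zero
      nlinarith
    have hn1 : (0:ℝ) < (n:ℝ) + 1 := by positivity
    have hRle : ∀ i : ℕ, (n - (k+2)*i : ℕ) ≤ n := fun i => Nat.sub_le _ _
    have hcard : ((Finset.range (K+1)).card : ℝ) ≤ (n:ℝ) + 1 := by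
      rw [Finset.card_range]
      have : K ≤ n := Nat.div_le_self n (k+2)
      exact_mod_cast Nat.succ_le_succ this
    -- per-term error bound for P at level k+1
    have hper : ∀ i ∈ Finset.range (K+1),
        |(wpsP (k+1) (n - (k+2)*i) : ℝ) - ((n - (k+2)*i : ℕ):ℝ)^k / cP|
          ≤ C * ((n:ℝ)+1)^k / ((n:ℝ)+1) := by
      intro i _
      set m := n - (k+2)*i with hm
      rcases Nat.eq_zero_or_pos k with hk0 | hkpos
      · subst hk0
        rw [wpsP_one]
        have : ((1:ℕ):ℝ) - ((m:ℕ):ℝ)^0 / cP = 0 := by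
          rw [hcP]
          norm_num [Nat.factorial]
        rw [this, abs_zero]
        positivity
      · have h := (hIH m).1
        refine h.trans ?_
        have hmn : ((m:ℕ):ℝ) + 1 ≤ (n:ℝ) + 1 := by
          have := hRle i
          exact_mod_cast Nat.succ_le_succ this
        have h1 : (0:ℝ) < (m:ℝ) + 1 := by positivity
        rw [div_le_div_iff₀ h1 hn1]
        obtain ⟨k', rfl⟩ : ∃ k', k = k' + 1 := ⟨k - 1, by omega⟩
        have hpow : ((m:ℝ)+1)^k' ≤ ((n:ℝ)+1)^k' :=
          pow_le_pow_left₀ (by positivity) hmn k'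
        have hm0 : (0:ℝ) ≤ (m:ℝ) + 1 := by positivity
        calc C * ((m:ℝ)+1)^(k'+1) * ((n:ℝ)+1)
            = C * (((m:ℝ)+1)^k' * ((n:ℝ)+1)) * ((m:ℝ)+1) := by ring
        _ ≤ C * (((n:ℝ)+1)^k' * ((n:ℝ)+1)) * ((m:ℝ)+1) := by
            have h2 : ((m:ℝ)+1)^k' * ((n:ℝ)+1) ≤ ((n:ℝ)+1)^k' * ((n:ℝ)+1) :=
              mul_le_mul_of_nonneg_right hpow (le_of_lt hn1)
            have h3 := mul_le_mul_of_nonneg_left h2 (le_of_lt hC)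
            exact mul_le_mul_of_nonneg_right h3 hm0
        _ = C * ((n:ℝ)+1)^(k'+1) * ((m:ℝ)+1) := by ring
    -- casts of factorials
    have hfk : (0:ℝ) < (k.factorial : ℝ) := by exact_mod_cast k.factorial_pos
    have hfk1 : (0:ℝ) < ((k+1).factorial : ℝ) := by exact_mod_cast (k+1).factorial_pos
    have hfk2 : (0:ℝ) < ((k+2).factorial : ℝ) := by exact_mod_cast (k+2).factorial_pos
    have hfac1 : ((k+1).factorial : ℝ) = ((k:ℝ)+1) * (k.factorial : ℝ) := by
      rw [Nat.factorial_succ]; push_cast; ring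
    have hfac2 : ((k+2).factorial : ℝ) = ((k:ℝ)+2) * ((k+1).factorial : ℝ) := by
      rw [Nat.factorial_succ]; push_cast; ring
    have hcP0 : (0:ℝ) < cP := by rw [hcP]; positivity
    have hcS0 : (0:ℝ) < cS := by rw [hcS]; positivity
    have hnn : (0:ℝ) ≤ (n:ℝ) := Nat.cast_nonneg n
    have hpow_n : (n:ℝ)^k ≤ ((n:ℝ)+1)^k := pow_le_pow_left₀ hnn (by linarith) k
    have hpow_n1 : (n:ℝ)^(k+1) ≤ ((n:ℝ)+1)^(k+1) := pow_le_pow_left₀ hnn (by linarith) (k+1)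
    have hpownn : (0:ℝ) ≤ ((n:ℝ)+1)^k := by positivity
    have hpownn1 : (0:ℝ) ≤ ((n:ℝ)+1)^(k+1) := by positivity
    -- cast the recursion for P
    have hPrec : (wpsP (k+2) n : ℝ)
        = ∑ i ∈ Finset.range (K+1), (wpsP (k+1) (n-(k+2)*i) : ℝ) := by
      have h := wpsP_succ (k+1) n
      exact_mod_cast congrArg (fun x : ℕ => (x:ℝ)) h
    -- error sum for P
    have hmulcancel : ((n:ℝ)+1) * (C*((n:ℝ)+1)^k/((n:ℝ)+1)) = C*((n:ℝ)+1)^k := by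
      field_simp
    have hBnonneg : (0:ℝ) ≤ C*((n:ℝ)+1)^k/((n:ℝ)+1) := by positivity
    have hP1 : |(wpsP (k+2) n:ℝ)
        - (∑ i ∈ Finset.range (K+1), ((n-(k+2)*i:ℕ):ℝ)^k)/cP| ≤ C*((n:ℝ)+1)^k := by
      rw [hPrec, Finset.sum_div]
      refine (wps_abs_sum_sub_le _ _ hper).trans ?_
      calc ((Finset.range (K+1)).card : ℝ) * (C*((n:ℝ)+1)^k/((n:ℝ)+1))
          ≤ ((n:ℝ)+1) * (C*((n:ℝ)+1)^k/((n:ℝ)+1)) :=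
            mul_le_mul_of_nonneg_right hcard hBnonneg
      _ = C*((n:ℝ)+1)^k := hmulcancel
    -- Riemann bound for ∑ (R i)^k
    have hsumP := wps_sum_pow_bounds (k+2) k n (by omega)
    have hP2 : |(∑ i ∈ Finset.range (K+1), ((n-(k+2)*i:ℕ):ℝ)^k)/cP
        - (n:ℝ)^(k+1) / (((k+1).factorial:ℝ)*((k+2).factorial:ℝ))| ≤ ((n:ℝ)+1)^k := by
      have hmainP : (n:ℝ)^(k+1)/((((k+2):ℕ):ℝ)*((k:ℝ)+1)) / cP
          = (n:ℝ)^(k+1) / (((k+1).factorial:ℝ)*((k+2).factorial:ℝ)) := by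
        rw [hcP, hfac2, hfac1]
        push_cast
        rw [div_div]
        ring_nf
      rw [← hmainP]
      set SP := ∑ i ∈ Finset.range (K+1), ((n-(k+2)*i:ℕ):ℝ)^k with hSP
      set M := (n:ℝ)^(k+1)/((((k+2):ℕ):ℝ)*((k:ℝ)+1)) with hM
      have h0 : 0 ≤ SP - M := by
        have := hsumP.1
        linarith
      have h1 : SP - M ≤ (n:ℝ)^k := by
        have := hsumP.2
        linarith
      rw [div_sub_div_same, abs_of_nonneg (by positivity)]
      calc (SP - M)/cP ≤ (SP - M) := div_le_self h0 hcP1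
      _ ≤ (n:ℝ)^k := h1
      _ ≤ ((n:ℝ)+1)^k := hpow_n
    have hPgoal : |(wpsP (k+2) n:ℝ)
        - (n:ℝ)^(k+1) / (((k+1).factorial:ℝ)*((k+2).factorial:ℝ))| ≤ (C+1)*((n:ℝ)+1)^k := by
      have := abs_sub_le ((wpsP (k+2) n:ℝ))
        ((∑ i ∈ Finset.range (K+1), ((n-(k+2)*i:ℕ):ℝ)^k)/cP)
        ((n:ℝ)^(k+1) / (((k+1).factorial:ℝ)*((k+2).factorial:ℝ)))
      calc |(wpsP (k+2) n:ℝ) - (n:ℝ)^(k+1) / (((k+1).factorial:ℝ)*((k+2).factorial:ℝ))|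
          ≤ _ + _ := this
      _ ≤ C*((n:ℝ)+1)^k + ((n:ℝ)+1)^k := add_le_add hP1 hP2
      _ = (C+1)*((n:ℝ)+1)^k := by ring
    constructor
    · -- the P goal
      have hrw : (wpsH (k+1) + 3*C + 3) * ((n:ℝ)+1)^(k+1) / ((n:ℝ)+1)
          = (wpsH (k+1) + 3*C + 3) * ((n:ℝ)+1)^k := by
        rw [pow_succ]
        field_simp
      rw [hrw]
      refine hPgoal.trans ?_
      have hH := wpsH_nonneg (k+1)
      nlinarith [hpownn]
    · -- the S goal
      have hSrec : (wpsS (k+2) n : ℝ)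
          = (∑ i ∈ Finset.range (K+1), (wpsS (k+1) (n-(k+2)*i):ℝ))
            + (∑ i ∈ Finset.range (K+1), (i:ℝ)*(wpsP (k+1) (n-(k+2)*i):ℝ)) := by
        have h := congrArg (fun x : ℕ => (x:ℝ)) (wpsS_succ (k+1) n)
        push_cast at h
        rw [h, Finset.sum_add_distrib]
      -- Part A: sum of S-terms
      have hSA : |(∑ i ∈ Finset.range (K+1), (wpsS (k+1) (n-(k+2)*i):ℝ))
          - ∑ i ∈ Finset.range (K+1), wpsH (k+1) * ((n-(k+2)*i:ℕ):ℝ)^(k+1) / cS|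
            ≤ C * ((n:ℝ)+1)^(k+1) := by
        have hperS : ∀ i ∈ Finset.range (K+1),
            |(wpsS (k+1) (n-(k+2)*i):ℝ) - wpsH (k+1) * ((n-(k+2)*i:ℕ):ℝ)^(k+1) / cS|
              ≤ C * ((n:ℝ)+1)^k := by
          intro i _
          refine ((hIH (n-(k+2)*i)).2).trans ?_
          have hmn : ((n-(k+2)*i:ℕ):ℝ) + 1 ≤ (n:ℝ) + 1 := by
            exact_mod_cast Nat.succ_le_succ (hRle i)
          exact mul_le_mul_of_nonneg_left
            (pow_le_pow_left₀ (by positivity) hmn k) (le_of_lt hC)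
        refine (wps_abs_sum_sub_le _ _ hperS).trans ?_
        calc ((Finset.range (K+1)).card : ℝ) * (C*((n:ℝ)+1)^k)
            ≤ ((n:ℝ)+1) * (C*((n:ℝ)+1)^k) :=
              mul_le_mul_of_nonneg_right hcard (by positivity)
        _ = C * ((n:ℝ)+1)^(k+1) := by rw [pow_succ]; ring
      have hsumS := wps_sum_pow_bounds (k+2) (k+1) n (by omega)
      -- Part A main term
      have hSA2 : |(∑ i ∈ Finset.range (K+1), wpsH (k+1) * ((n-(k+2)*i:ℕ):ℝ)^(k+1) / cS)
          - wpsH (k+1) * ((n:ℝ)^(k+2)/((((k+2):ℕ):ℝ)*((((k+1):ℕ):ℝ)+1))) / cS|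
            ≤ wpsH (k+1) * ((n:ℝ)+1)^(k+1) := by
        have hH := wpsH_nonneg (k+1)
        rw [show (∑ i ∈ Finset.range (K+1), wpsH (k+1) * ((n-(k+2)*i:ℕ):ℝ)^(k+1) / cS)
            = wpsH (k+1) * (∑ i ∈ Finset.range (K+1), ((n-(k+2)*i:ℕ):ℝ)^(k+1)) / cS by
          rw [Finset.mul_sum, Finset.sum_div]]
        set SS := ∑ i ∈ Finset.range (K+1), ((n-(k+2)*i:ℕ):ℝ)^(k+1) with hSS
        set M := (n:ℝ)^(k+2)/((((k+2):ℕ):ℝ)*((((k+1):ℕ):ℝ)+1)) with hM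
        have h0 : 0 ≤ SS - M := by
          have := hsumS.1
          linarith
        have h1 : SS - M ≤ (n:ℝ)^(k+1) := by
          have := hsumS.2
          linarith
        rw [show wpsH (k+1) * SS / cS - wpsH (k+1) * M / cS
            = wpsH (k+1) * (SS - M) / cS by ring]
        rw [abs_of_nonneg (by positivity)]
        calc wpsH (k+1) * (SS - M) / cS ≤ wpsH (k+1) * (SS - M) :=
              div_le_self (by positivity) hcS1
        _ ≤ wpsH (k+1) * (n:ℝ)^(k+1) := mul_le_mul_of_nonneg_left h1 hH
        _ ≤ wpsH (k+1) * ((n:ℝ)+1)^(k+1) := mul_le_mul_of_nonneg_left hpow_n1 hH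
      -- Part B: the k * P sum, rewritten via R i
      have hTB : (∑ i ∈ Finset.range (K+1), (i:ℝ)*(wpsP (k+1) (n-(k+2)*i):ℝ))
          = ((n:ℝ) * (wpsP (k+2) n:ℝ)
              - ∑ i ∈ Finset.range (K+1), ((n-(k+2)*i:ℕ):ℝ)*(wpsP (k+1) (n-(k+2)*i):ℝ))
            / ((k:ℝ)+2) := by
        rw [hPrec, Finset.mul_sum, ← Finset.sum_sub_distrib, Finset.sum_div]
        refine Finset.sum_congr rfl fun i hi => ?_
        have hle : (k+2)*i ≤ n := by
          have h1 := Nat.lt_succ_iff.1 (Finset.mem_range.1 hi)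
          have h2 := (Nat.le_div_iff_mul_le (by omega : 0 < k+2)).1 h1
          linarith
        have hcast : ((n-(k+2)*i : ℕ):ℝ) = (n:ℝ) - ((k:ℝ)+2)*(i:ℝ) := by
          push_cast [hle]
          ring
        rw [hcast]
        field_simp
        ring
      -- Bound: |n * P(k+2,n) - n^{k+2}/((k+1)!(k+2)!)|
      have hB1 : |(n:ℝ) * (wpsP (k+2) n:ℝ)
          - (n:ℝ)^(k+2) / (((k+1).factorial:ℝ)*((k+2).factorial:ℝ))|
            ≤ (C+1) * ((n:ℝ)+1)^(k+1) := by
        rw [show (n:ℝ) * (wpsP (k+2) n:ℝ)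
            - (n:ℝ)^(k+2) / (((k+1).factorial:ℝ)*((k+2).factorial:ℝ))
            = (n:ℝ) * ((wpsP (k+2) n:ℝ)
                - (n:ℝ)^(k+1) / (((k+1).factorial:ℝ)*((k+2).factorial:ℝ))) by
          rw [pow_succ']
          ring]
        rw [abs_mul, abs_of_nonneg hnn]
        calc (n:ℝ) * |(wpsP (k+2) n:ℝ)
            - (n:ℝ)^(k+1) / (((k+1).factorial:ℝ)*((k+2).factorial:ℝ))|
            ≤ ((n:ℝ)+1) * ((C+1) * ((n:ℝ)+1)^k) := by
              refine mul_le_mul (by linarith) hPgoal (abs_nonneg _) (by linarith)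
        _ = (C+1) * ((n:ℝ)+1)^(k+1) := by rw [pow_succ]; ring
      -- Bound: | Σ R_i P(R_i) - Σ R_i^{k+1}/cP |
      have hB2 : |(∑ i ∈ Finset.range (K+1), ((n-(k+2)*i:ℕ):ℝ)*(wpsP (k+1) (n-(k+2)*i):ℝ))
          - ∑ i ∈ Finset.range (K+1), ((n-(k+2)*i:ℕ):ℝ)^(k+1)/cP|
            ≤ C * ((n:ℝ)+1)^(k+1) := by
        have hperB : ∀ i ∈ Finset.range (K+1),
            |((n-(k+2)*i:ℕ):ℝ)*(wpsP (k+1) (n-(k+2)*i):ℝ)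
              - ((n-(k+2)*i:ℕ):ℝ)^(k+1)/cP| ≤ C * ((n:ℝ)+1)^k := by
          intro i hi
          rw [show ((n-(k+2)*i:ℕ):ℝ)*(wpsP (k+1) (n-(k+2)*i):ℝ)
              - ((n-(k+2)*i:ℕ):ℝ)^(k+1)/cP
              = ((n-(k+2)*i:ℕ):ℝ) * ((wpsP (k+1) (n-(k+2)*i):ℝ)
                  - ((n-(k+2)*i:ℕ):ℝ)^k/cP) by
            rw [pow_succ']
            ring]
          rw [abs_mul, abs_of_nonneg (Nat.cast_nonneg _)]
          have hRn : ((n-(k+2)*i:ℕ):ℝ) ≤ (n:ℝ)+1 := by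
            have := hRle i
            have : ((n-(k+2)*i:ℕ):ℝ) ≤ (n:ℝ) := by exact_mod_cast this
            linarith
          calc ((n-(k+2)*i:ℕ):ℝ) * |(wpsP (k+1) (n-(k+2)*i):ℝ)
              - ((n-(k+2)*i:ℕ):ℝ)^k/cP|
              ≤ ((n:ℝ)+1) * (C*((n:ℝ)+1)^k/((n:ℝ)+1)) :=
                mul_le_mul hRn (hper i hi) (abs_nonneg _) (by linarith)
          _ = C * ((n:ℝ)+1)^k := hmulcancel
        refine (wps_abs_sum_sub_le _ _ hperB).trans ?_
        calc ((Finset.range (K+1)).card : ℝ) * (C*((n:ℝ)+1)^k)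
            ≤ ((n:ℝ)+1) * (C*((n:ℝ)+1)^k) :=
              mul_le_mul_of_nonneg_right hcard (by positivity)
        _ = C * ((n:ℝ)+1)^(k+1) := by rw [pow_succ]; ring
      -- Bound: | Σ R_i^{k+1}/cP - main |
      have hB3 : |(∑ i ∈ Finset.range (K+1), ((n-(k+2)*i:ℕ):ℝ)^(k+1)/cP)
          - (n:ℝ)^(k+2)/((((k+2):ℕ):ℝ)*((((k+1):ℕ):ℝ)+1)) / cP| ≤ ((n:ℝ)+1)^(k+1) := by
        rw [← Finset.sum_div]
        set SS := ∑ i ∈ Finset.range (K+1), ((n-(k+2)*i:ℕ):ℝ)^(k+1) with hSS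
        set M := (n:ℝ)^(k+2)/((((k+2):ℕ):ℝ)*((((k+1):ℕ):ℝ)+1)) with hM
        have h0 : 0 ≤ SS - M := by
          have := hsumS.1
          linarith
        have h1 : SS - M ≤ (n:ℝ)^(k+1) := by
          have := hsumS.2
          linarith
        rw [div_sub_div_same, abs_of_nonneg (by positivity)]
        calc (SS - M)/cP ≤ SS - M := div_le_self h0 hcP1
        _ ≤ (n:ℝ)^(k+1) := h1
        _ ≤ ((n:ℝ)+1)^(k+1) := hpow_n1
      -- Part B total bound
      have hBgoal : |(∑ i ∈ Finset.range (K+1), (i:ℝ)*(wpsP (k+1) (n-(k+2)*i):ℝ))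
          - ((n:ℝ)^(k+2) / (((k+1).factorial:ℝ)*((k+2).factorial:ℝ))
              - (n:ℝ)^(k+2)/((((k+2):ℕ):ℝ)*((((k+1):ℕ):ℝ)+1)) / cP) / ((k:ℝ)+2)|
            ≤ (2*C+2) * ((n:ℝ)+1)^(k+1) := by
        rw [hTB, div_sub_div_same, abs_div]
        rw [abs_of_nonneg (by positivity : (0:ℝ) ≤ (k:ℝ)+2)]
        have hX : |(n:ℝ) * (wpsP (k+2) n:ℝ)
            - (∑ i ∈ Finset.range (K+1), ((n-(k+2)*i:ℕ):ℝ)*(wpsP (k+1) (n-(k+2)*i):ℝ))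
            - ((n:ℝ)^(k+2) / (((k+1).factorial:ℝ)*((k+2).factorial:ℝ))
                - (n:ℝ)^(k+2)/((((k+2):ℕ):ℝ)*((((k+1):ℕ):ℝ)+1)) / cP)|
              ≤ (2*C+2) * ((n:ℝ)+1)^(k+1) := by
          have htri : |(n:ℝ) * (wpsP (k+2) n:ℝ)
              - (∑ i ∈ Finset.range (K+1), ((n-(k+2)*i:ℕ):ℝ)*(wpsP (k+1) (n-(k+2)*i):ℝ))
              - ((n:ℝ)^(k+2) / (((k+1).factorial:ℝ)*((k+2).factorial:ℝ))
                  - (n:ℝ)^(k+2)/((((k+2):ℕ):ℝ)*((((k+1):ℕ):ℝ)+1)) / cP)|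
              ≤ |(n:ℝ) * (wpsP (k+2) n:ℝ)
                  - (n:ℝ)^(k+2) / (((k+1).factorial:ℝ)*((k+2).factorial:ℝ))|
                + |(∑ i ∈ Finset.range (K+1), ((n-(k+2)*i:ℕ):ℝ)*(wpsP (k+1) (n-(k+2)*i):ℝ))
                    - (n:ℝ)^(k+2)/((((k+2):ℕ):ℝ)*((((k+1):ℕ):ℝ)+1)) / cP| := by
            rw [show (n:ℝ) * (wpsP (k+2) n:ℝ)
                - (∑ i ∈ Finset.range (K+1), ((n-(k+2)*i:ℕ):ℝ)*(wpsP (k+1) (n-(k+2)*i):ℝ))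
                - ((n:ℝ)^(k+2) / (((k+1).factorial:ℝ)*((k+2).factorial:ℝ))
                    - (n:ℝ)^(k+2)/((((k+2):ℕ):ℝ)*((((k+1):ℕ):ℝ)+1)) / cP)
                = ((n:ℝ) * (wpsP (k+2) n:ℝ)
                    - (n:ℝ)^(k+2) / (((k+1).factorial:ℝ)*((k+2).factorial:ℝ)))
                  - ((∑ i ∈ Finset.range (K+1),
                        ((n-(k+2)*i:ℕ):ℝ)*(wpsP (k+1) (n-(k+2)*i):ℝ))
                    - (n:ℝ)^(k+2)/((((k+2):ℕ):ℝ)*((((k+1):ℕ):ℝ)+1)) / cP) by ring]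
            exact abs_sub _ _
          have hB23 : |(∑ i ∈ Finset.range (K+1),
                ((n-(k+2)*i:ℕ):ℝ)*(wpsP (k+1) (n-(k+2)*i):ℝ))
              - (n:ℝ)^(k+2)/((((k+2):ℕ):ℝ)*((((k+1):ℕ):ℝ)+1)) / cP|
              ≤ (C+1) * ((n:ℝ)+1)^(k+1) := by
            have := abs_sub_le
              (∑ i ∈ Finset.range (K+1), ((n-(k+2)*i:ℕ):ℝ)*(wpsP (k+1) (n-(k+2)*i):ℝ))
              (∑ i ∈ Finset.range (K+1), ((n-(k+2)*i:ℕ):ℝ)^(k+1)/cP)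
              ((n:ℝ)^(k+2)/((((k+2):ℕ):ℝ)*((((k+1):ℕ):ℝ)+1)) / cP)
            calc |(∑ i ∈ Finset.range (K+1),
                  ((n-(k+2)*i:ℕ):ℝ)*(wpsP (k+1) (n-(k+2)*i):ℝ))
                - (n:ℝ)^(k+2)/((((k+2):ℕ):ℝ)*((((k+1):ℕ):ℝ)+1)) / cP|
                ≤ _ + _ := this
            _ ≤ C * ((n:ℝ)+1)^(k+1) + ((n:ℝ)+1)^(k+1) := add_le_add hB2 hB3
            _ = (C+1) * ((n:ℝ)+1)^(k+1) := by ring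
          calc _ ≤ _ := htri
          _ ≤ (C+1) * ((n:ℝ)+1)^(k+1) + (C+1) * ((n:ℝ)+1)^(k+1) := add_le_add hB1 hB23
          _ = (2*C+2) * ((n:ℝ)+1)^(k+1) := by ring
        calc _ / ((k:ℝ)+2) ≤ _ := div_le_self (abs_nonneg _) (by linarith)
        _ ≤ (2*C+2) * ((n:ℝ)+1)^(k+1) := hX
      -- main-term identity
      have hmain_id : wpsH (k+2) * (n:ℝ)^(k+2)
            / (((k+2).factorial:ℝ)*((k+2).factorial:ℝ))
          = wpsH (k+1) * ((n:ℝ)^(k+2)/((((k+2):ℕ):ℝ)*((((k+1):ℕ):ℝ)+1))) / cS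
            + ((n:ℝ)^(k+2) / (((k+1).factorial:ℝ)*((k+2).factorial:ℝ))
                - (n:ℝ)^(k+2)/((((k+2):ℕ):ℝ)*((((k+1):ℕ):ℝ)+1)) / cP) / ((k:ℝ)+2) := by
        rw [wpsH_succ (k+1), hcS, hcP, hfac2, hfac1]
        push_cast
        have hk0 : ((k:ℝ)+1) ≠ 0 := by positivity
        have hk2 : ((k:ℝ)+2) ≠ 0 := by positivity
        have hfk' : (k.factorial:ℝ) ≠ 0 := ne_of_gt hfk
        field_simp
        ring
      have hA : |(∑ i ∈ Finset.range (K+1), (wpsS (k+1) (n-(k+2)*i):ℝ))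
          - wpsH (k+1) * ((n:ℝ)^(k+2)/((((k+2):ℕ):ℝ)*((((k+1):ℕ):ℝ)+1))) / cS|
            ≤ (C + wpsH (k+1)) * ((n:ℝ)+1)^(k+1) := by
        have htri := abs_sub_le
          (∑ i ∈ Finset.range (K+1), (wpsS (k+1) (n-(k+2)*i):ℝ))
          (∑ i ∈ Finset.range (K+1), wpsH (k+1) * ((n-(k+2)*i:ℕ):ℝ)^(k+1) / cS)
          (wpsH (k+1) * ((n:ℝ)^(k+2)/((((k+2):ℕ):ℝ)*((((k+1):ℕ):ℝ)+1))) / cS)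
        calc |(∑ i ∈ Finset.range (K+1), (wpsS (k+1) (n-(k+2)*i):ℝ))
            - wpsH (k+1) * ((n:ℝ)^(k+2)/((((k+2):ℕ):ℝ)*((((k+1):ℕ):ℝ)+1))) / cS|
            ≤ _ + _ := htri
        _ ≤ C * ((n:ℝ)+1)^(k+1) + wpsH (k+1) * ((n:ℝ)+1)^(k+1) := add_le_add hSA hSA2
        _ = (C + wpsH (k+1)) * ((n:ℝ)+1)^(k+1) := by ring
      rw [hSrec, hmain_id]
      rw [show (∑ i ∈ Finset.range (K+1), (wpsS (k+1) (n-(k+2)*i):ℝ))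
            + (∑ i ∈ Finset.range (K+1), (i:ℝ)*(wpsP (k+1) (n-(k+2)*i):ℝ))
          - (wpsH (k+1) * ((n:ℝ)^(k+2)/((((k+2):ℕ):ℝ)*((((k+1):ℕ):ℝ)+1))) / cS
            + ((n:ℝ)^(k+2) / (((k+1).factorial:ℝ)*((k+2).factorial:ℝ))
                - (n:ℝ)^(k+2)/((((k+2):ℕ):ℝ)*((((k+1):ℕ):ℝ)+1)) / cP) / ((k:ℝ)+2))
          = ((∑ i ∈ Finset.range (K+1), (wpsS (k+1) (n-(k+2)*i):ℝ))
            - wpsH (k+1) * ((n:ℝ)^(k+2)/((((k+2):ℕ):ℝ)*((((k+1):ℕ):ℝ)+1))) / cS)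
            + ((∑ i ∈ Finset.range (K+1), (i:ℝ)*(wpsP (k+1) (n-(k+2)*i):ℝ))
              - ((n:ℝ)^(k+2) / (((k+1).factorial:ℝ)*((k+2).factorial:ℝ))
                - (n:ℝ)^(k+2)/((((k+2):ℕ):ℝ)*((((k+1):ℕ):ℝ)+1)) / cP) / ((k:ℝ)+2))
          from by ring]
      refine (abs_add_le _ _).trans ?_
      have hH := wpsH_nonneg (k+1)
      calc _ ≤ (C + wpsH (k+1)) * ((n:ℝ)+1)^(k+1) + (2*C+2) * ((n:ℝ)+1)^(k+1) :=
            add_le_add hA hBgoal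
      _ ≤ (wpsH (k+1) + 3*C + 3) * ((n:ℝ)+1)^(k+1) := by nlinarith [hpownn1, hC]



end WPS

/-- asymptotics of the weighted partition sum
`S(m) = Σ_{m₁+2m₂+⋯+κm_κ = m} (m₁ + ⋯ + m_κ)`:
`|S(m) − H_κ·m^κ/(κ!·κ!)| ≤ C·m^{κ−1}` for all `m ≥ 1`, for some constant `C > 0`.
Tuples `(m₁, …, m_κ)` are encoded as `t : Fin κ → ℕ` with `t i` standing for `m_{i+1}`;
since the weight of each `m_i` is at least `1`, every solution of
`m₁ + 2m₂ + ⋯ + κm_κ = m` has all entries `≤ m`, so ranging over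
`Fin κ → Finset.range (m+1)` captures all of them. -/
theorem weighted_partition_sum_asymptotics (κ : ℕ) (hκ : 1 ≤ κ) :
    ∃ C : ℝ, 0 < C ∧ ∀ m : ℕ, 1 ≤ m →
      |((∑ t ∈ (Fintype.piFinset fun _ : Fin κ => Finset.range (m + 1)).filter
            (fun t => ∑ i : Fin κ, ((i : ℕ) + 1) * t i = m),
            ∑ i : Fin κ, t i : ℕ) : ℝ)
          - (∑ j ∈ Finset.Icc 1 κ, (1 : ℝ) / j) * (m : ℝ) ^ κ
              / ((κ.factorial : ℝ) * (κ.factorial : ℝ))|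
        ≤ C * (m : ℝ) ^ (κ - 1) := by
  obtain ⟨k, rfl⟩ : ∃ k, κ = k + 1 := ⟨κ - 1, by omega⟩
  obtain ⟨C, hC, h⟩ := wps_key k
  refine ⟨C * 2 ^ k, by positivity, fun m hm => ?_⟩
  have h2 := (h m).2
  have hrfl : (∑ t ∈ (Fintype.piFinset fun _ : Fin (k+1) => Finset.range (m + 1)).filter
        (fun t => ∑ i : Fin (k+1), ((i : ℕ) + 1) * t i = m),
        ∑ i : Fin (k+1), t i) = wpsS (k+1) m := rfl
  rw [hrfl]
  have hH : (∑ j ∈ Finset.Icc 1 (k+1), (1:ℝ)/j) = wpsH (k+1) := rfl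
  rw [hH]
  simp only [Nat.add_sub_cancel]
  refine h2.trans ?_
  have hm1 : (1:ℝ) ≤ (m:ℝ) := by exact_mod_cast hm
  have hple : ((m:ℝ)+1)^k ≤ (2*(m:ℝ))^k :=
    pow_le_pow_left₀ (by positivity) (by linarith) k
  calc C*((m:ℝ)+1)^k ≤ C*(2*(m:ℝ))^k := mul_le_mul_of_nonneg_left hple (le_of_lt hC)
  _ = C*2^k*(m:ℝ)^k := by rw [mul_pow]; ring
end
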